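/- Let W be an n×n real matrix and λ > 0. If the Frobenius norm of W satisfies ‖W‖_F < 4/λ, then the map G : ℝⁿ → ℝⁿ defined componentwise by G(A)_i = 1/(1 + exp(-λ (W A)_i)) is a contraction with respect to the Euclidean metric, with contraction constant (λ/4)‖W‖_F < 1. -/

import Mathlib

lemma sig_lip (l : ℝ) (hl : 0 < l) (a b : ℝ) :
    |1 / (1 + Real.exp (-l * a)) - 1 / (1 + Real.exp (-l * b))| ≤ l / 4 * |a - b| := by
  set f : ℝ → ℝ := fun t => (1 + Real.exp (-l * t))⁻¹ with hf
  have hpos : ∀ t : ℝ, 0 < 1 + Real.exp (-l * t) := fun t => by positivity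
  have hderiv : ∀ t : ℝ, HasDerivAt f (l * Real.exp (-l * t) / (1 + Real.exp (-l * t)) ^ 2) t := by
    intro t
    have h1 : HasDerivAt (fun t : ℝ => -l * t) (-l) t := by
      simpa using (hasDerivAt_id t).const_mul (-l)
    have h4 : HasDerivAt f (-(Real.exp (-l * t) * -l) / (1 + Real.exp (-l * t)) ^ 2) t :=
      ((h1.exp).const_add 1).fun_inv (ne_of_gt (hpos t))
    convert h4 using 1
    ring
  have hbound : ∀ t : ℝ, ‖deriv f t‖ ≤ l / 4 := by
    intro t
    rw [(hderiv t).deriv, Real.norm_eq_abs]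
    have he := Real.exp_pos (-l * t)
    have h2 : (1 + Real.exp (-l * t)) ^ 2 ≥ 4 * Real.exp (-l * t) := by
      nlinarith [sq_nonneg (1 - Real.exp (-l * t))]
    rw [abs_of_nonneg (by positivity)]
    rw [div_le_iff₀ (by positivity)]
    nlinarith
  have := Convex.norm_image_sub_le_of_norm_deriv_le
    (f := f) (s := Set.univ)
    (fun x _ => ((hderiv x).differentiableAt))
    (fun x _ => hbound x) convex_univ (Set.mem_univ b) (Set.mem_univ a)
  simpa [hf, Real.norm_eq_abs, one_div, neg_mul] using this

theorem sigmoid_fcm_contraction (n : ℕ) (l : ℝ) (hl : 0 < l)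
    (W : Matrix (Fin n) (Fin n) ℝ)
    (hW : Real.sqrt (∑ i, ∑ j, (W i j) ^ 2) < 4 / l)
    (G : (Fin n → ℝ) → (Fin n → ℝ))
    (hG : ∀ A i, G A i = 1 / (1 + Real.exp (-l * ∑ j, W i j * A j))) :
    (l / 4 * Real.sqrt (∑ i, ∑ j, (W i j) ^ 2) < 1) ∧
    ∀ A A' : Fin n → ℝ,
      Real.sqrt (∑ i, (G A i - G A' i) ^ 2) ≤
        (l / 4 * Real.sqrt (∑ i, ∑ j, (W i j) ^ 2)) *
          Real.sqrt (∑ i, (A i - A' i) ^ 2) := by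
  have hS0 : (0:ℝ) ≤ Real.sqrt (∑ i, ∑ j, (W i j) ^ 2) := Real.sqrt_nonneg _
  constructor
  · have h := mul_lt_mul_of_pos_left hW (show (0:ℝ) < l / 4 by positivity)
    have : l / 4 * (4 / l) = 1 := by field_simp
    linarith
  · intro A A'
    have key : ∀ i, (G A i - G A' i) ^ 2 ≤
        (l / 4) ^ 2 * ((∑ j, (W i j) ^ 2) * (∑ j, (A j - A' j) ^ 2)) := by
      intro i
      have hlip : |G A i - G A' i| ≤
          l / 4 * |(∑ j, W i j * A j) - (∑ j, W i j * A' j)| := by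
        rw [hG A i, hG A' i]
        exact sig_lip l hl _ _
      have hdiff : (∑ j, W i j * A j) - (∑ j, W i j * A' j)
          = ∑ j, W i j * (A j - A' j) := by
        rw [← Finset.sum_sub_distrib]
        exact Finset.sum_congr rfl fun j _ => by ring
      have hcs : (∑ j, W i j * (A j - A' j)) ^ 2 ≤
          (∑ j, (W i j) ^ 2) * (∑ j, (A j - A' j) ^ 2) :=
        Finset.sum_mul_sq_le_sq_mul_sq _ _ _
      calc (G A i - G A' i) ^ 2 = |G A i - G A' i| ^ 2 := (sq_abs _).symm
        _ ≤ (l / 4 * |(∑ j, W i j * A j) - (∑ j, W i j * A' j)|) ^ 2 := by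
            apply pow_le_pow_left₀ (abs_nonneg _) hlip
        _ = (l / 4) ^ 2 * ((∑ j, W i j * (A j - A' j)) ^ 2) := by
            rw [mul_pow, hdiff, sq_abs]
        _ ≤ (l / 4) ^ 2 * ((∑ j, (W i j) ^ 2) * (∑ j, (A j - A' j) ^ 2)) := by
            apply mul_le_mul_of_nonneg_left hcs (by positivity)
    have hsum : (∑ i, (G A i - G A' i) ^ 2) ≤
        (l / 4) ^ 2 * (∑ i, ∑ j, (W i j) ^ 2) * (∑ j, (A j - A' j) ^ 2) := by
      calc (∑ i, (G A i - G A' i) ^ 2)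
          ≤ ∑ i, (l / 4) ^ 2 * ((∑ j, (W i j) ^ 2) * (∑ j, (A j - A' j) ^ 2)) :=
            Finset.sum_le_sum fun i _ => key i
        _ = (l / 4) ^ 2 * (∑ i, ∑ j, (W i j) ^ 2) * (∑ j, (A j - A' j) ^ 2) := by
            rw [← Finset.mul_sum, ← Finset.sum_mul, ← mul_assoc]
    have := Real.sqrt_le_sqrt hsum
    refine this.trans (le_of_eq ?_)
    rw [Real.sqrt_mul (by positivity), Real.sqrt_mul (by positivity),
      Real.sqrt_sq (by positivity)]
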